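/- arXiv:2104.07197 — 4 statements merged into one kernel-verified Lean document; each statement's English description precedes it below -/
import Mathlib

section
/- Suppose w_1,...,w_{n−1} is a palindrome (w_i = w_{n−i} for i = 1,...,n−1) of real numbers, n odd, n = 2k+1. Then Q_n = (Q_{k+1} − Q_k)(Q_{k+1} + Q_k), where all continuants are evaluated at (w_1, w_2, ...). -/
/-- The signed continuant polynomials: `contQ w t = Q_t(w_1,…,w_{t-1})`,
with `Q_{-1} = -1`, `Q_0 = 0`, `Q_{t+1} = w_t Q_t - Q_{t-1}` (so `Q_1 = 1`). -/
def contQ (w : ℕ → ℝ) : ℕ → ℝ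
  | 0 => 0
  | 1 => 1
  | (t+2) => w (t+1) * contQ w (t+1) - contQ w t

theorem contQ_split (w : ℕ → ℝ) (m : ℕ) : ∀ t : ℕ,
    contQ w (m + t + 1) =
      contQ w (m + 1) * contQ (fun i => w (m + i)) (t + 1)
        - contQ w m * contQ (fun i => w (m + 1 + i)) t
  | 0 => by simp [contQ]
  | 1 => by
      have h1 : contQ w (m + 2) = w (m+1) * contQ w (m+1) - contQ w m := rfl
      have h2 : contQ (fun i => w (m + i)) 2
          = w (m+1) * contQ (fun i => w (m+i)) 1 - contQ (fun i => w (m+i)) 0 := rfl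
      simp [contQ] at h2 ⊢
      ring
  | (t+2) => by
      have ih1 := contQ_split w m (t+1)
      have ih2 := contQ_split w m t
      have hL : contQ w (m + (t+2) + 1)
          = w (m + t + 2) * contQ w (m + t + 2) - contQ w (m + t + 1) := by
        show contQ w (m + t + 3) = _
        rw [show m + t + 3 = (m + t + 1) + 2 by ring]
        show w (m + t + 1 + 1) * contQ w (m + t + 1 + 1) - contQ w (m + t + 1) = _
        rw [show m + t + 1 + 1 = m + t + 2 by ring]
      have hA : contQ (fun i => w (m + i)) (t + 3)
          = w (m + t + 2) * contQ (fun i => w (m + i)) (t + 2)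
            - contQ (fun i => w (m + i)) (t + 1) := by
        show w (m + (t + 2)) * _ - _ = _
        rw [show m + (t + 2) = m + t + 2 by ring]
      have hB : contQ (fun i => w (m + 1 + i)) (t + 2)
          = w (m + t + 2) * contQ (fun i => w (m + 1 + i)) (t + 1)
            - contQ (fun i => w (m + 1 + i)) t := by
        show w (m + 1 + (t + 1)) * _ - _ = _
        rw [show m + 1 + (t + 1) = m + t + 2 by ring]
      rw [hL, hA, hB,
        show m + (t+1) + 1 = m + t + 2 by ring] at *
      rw [show m + t + 1 + 1 = m + t + 2 by ring] at ih1
      rw [ih1, ih2]; ring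

theorem contQ_congr (v v' : ℕ → ℝ) : ∀ n : ℕ,
    (∀ i, 1 ≤ i → i ≤ n - 1 → v i = v' i) → contQ v n = contQ v' n
  | 0, _ => rfl
  | 1, _ => rfl
  | (t+2), h => by
      have h1 := contQ_congr v v' (t+1) (fun i hi hi' => h i hi (by omega))
      have h2 := contQ_congr v v' t (fun i hi hi' => h i hi (by omega))
      show v (t+1) * contQ v (t+1) - contQ v t = v' (t+1) * contQ v' (t+1) - contQ v' t
      rw [h1, h2, h (t+1) (by omega) (by omega)]

theorem contQ_rev (v : ℕ → ℝ) : ∀ n : ℕ,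
    contQ (fun i => v (n - i)) n = contQ v n
  | 0 => rfl
  | 1 => rfl
  | (n+2) => by
      have ih1 := contQ_rev v (n+1)
      have ih2 := contQ_rev v n
      -- left recursion from the splitting identity with m = 1
      have hs := contQ_split (fun i => v (n + 2 - i)) 1 n
      have e2 : contQ (fun i => v (n + 2 - i)) 2 = v (n + 1) := by
        show (fun i => v (n + 2 - i)) 1 * 1 - 0 = v (n + 1)
        simp
      have e1 : contQ (fun i => v (n + 2 - i)) 1 = 1 := rfl
      rw [show 1 + n + 1 = n + 2 by ring, e1, e2, one_mul] at hs
      have f1 : (fun i => (fun j => v (n + 2 - j)) (1 + i)) = (fun i => v (n + 1 - i)) := by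
        funext i; simp only; congr 1; omega
      have f2 : (fun i => (fun j => v (n + 2 - j)) (1 + 1 + i)) = (fun i => v (n - i)) := by
        funext i; simp only; congr 1; omega
      rw [f1, f2, ih1, ih2] at hs
      rw [hs]
      show _ = v (n+1) * contQ v (n+1) - contQ v n
      ring

/-- If `w_1,…,w_{n-1}` is a palindrome and `n = 2k+1` is odd, then
`Q_n = (Q_{k+1} - Q_k)(Q_{k+1} + Q_k)`. -/
theorem contQ_factor_odd (w : ℕ → ℝ) (k : ℕ)
    (hpal : ∀ i, 1 ≤ i → i ≤ 2 * k + 1 - 1 → w i = w (2 * k + 1 - i)) :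
    contQ w (2 * k + 1) =
      (contQ w (k + 1) - contQ w k) * (contQ w (k + 1) + contQ w k) := by
  have hs := contQ_split w k k
  rw [show k + k + 1 = 2 * k + 1 by ring] at hs
  have hA : contQ (fun i => w (k + i)) (k + 1) = contQ w (k + 1) := by
    rw [← contQ_rev (fun i => w (k + i)) (k + 1)]
    apply contQ_congr
    intro i hi hi'
    show w (k + (k + 1 - i)) = w i
    rw [show k + (k + 1 - i) = 2 * k + 1 - i by omega]
    exact (hpal i hi (by omega)).symm
  have hB : contQ (fun i => w (k + 1 + i)) k = contQ w k := by
    rw [← contQ_rev (fun i => w (k + 1 + i)) k]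
    apply contQ_congr
    intro i hi hi'
    show w (k + 1 + (k - i)) = w i
    rw [show k + 1 + (k - i) = 2 * k + 1 - i by omega]
    exact (hpal i hi (by omega)).symm
  rw [hs, hA, hB]; ring
end

section
/- Suppose w_1,...,w_{n−1} is a palindrome (w_i = w_{n−i}) of real numbers, n even, n = 2k. Then Q_n = (Q_{k+1} − Q_{k−1})·Q_k, where all continuants are evaluated at (w_1, w_2, ...). -/
namespace ContQAux

open Matrix

def Amat (x : ℝ) : Matrix (Fin 2) (Fin 2) ℝ := !![x, -1; 1, 0]

def Jmat : Matrix (Fin 2) (Fin 2) ℝ := !![1, 0; 0, -1]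

def Pmat (w : ℕ → ℝ) : ℕ → Matrix (Fin 2) (Fin 2) ℝ
  | 0 => 1
  | (t+1) => Amat (w (t+1)) * Pmat w t

def Pmat' (w : ℕ → ℝ) : ℕ → Matrix (Fin 2) (Fin 2) ℝ
  | 0 => 1
  | (t+1) => Pmat' w t * Amat (w (t+1))

lemma Pmat_entries (w : ℕ → ℝ) : ∀ t, Pmat w t 0 0 = contQ w (t+1) ∧ Pmat w t 1 0 = contQ w t := by
  intro t
  induction t with
  | zero => simp [Pmat, contQ, Matrix.one_apply]
  | succ t ih =>
    obtain ⟨h0, h1⟩ := ih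
    constructor
    · show (Amat (w (t+1)) * Pmat w t) 0 0 = _
      rw [Matrix.mul_apply, Fin.sum_univ_two]
      simp [Amat, contQ, h0, h1]
      ring
    · show (Amat (w (t+1)) * Pmat w t) 1 0 = _
      rw [Matrix.mul_apply, Fin.sum_univ_two]
      simp [Amat, h0]

lemma Pmat_split (w : ℕ → ℝ) (t : ℕ) : ∀ s, Pmat w (s + t) = Pmat (fun i => w (i + t)) s * Pmat w t := by
  intro s
  induction s with
  | zero => simp [Pmat]
  | succ s ih =>
    have h1 : s + 1 + t = (s + t) + 1 := by omega
    rw [h1]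
    show Amat (w (s + t + 1)) * Pmat w (s + t) = Pmat (fun i => w (i + t)) (s + 1) * Pmat w t
    rw [ih]
    show _ = (Amat (w (s + 1 + t)) * Pmat (fun i => w (i + t)) s) * Pmat w t
    rw [h1, Matrix.mul_assoc]

lemma AmatT (x : ℝ) : (Amat x)ᵀ = !![x, 1; -1, 0] := by
  ext i j
  fin_cases i <;> fin_cases j <;> simp [Amat]

lemma JAJ (x : ℝ) : Jmat * (Amat x)ᵀ * Jmat = Amat x := by
  rw [AmatT]
  simp [Jmat, Amat, Matrix.mul_fin_two]

lemma JJ : Jmat * Jmat = 1 := by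
  simp [Jmat, Matrix.mul_fin_two, Matrix.one_fin_two]

lemma Jconj_mul (M N : Matrix (Fin 2) (Fin 2) ℝ) :
    Jmat * (M * N) * Jmat = (Jmat * M * Jmat) * (Jmat * N * Jmat) := by
  have h1 : (Jmat * M * Jmat) * (Jmat * N * Jmat)
      = Jmat * (M * ((Jmat * Jmat) * (N * Jmat))) := by
    simp only [Matrix.mul_assoc]
  rw [h1, JJ, Matrix.one_mul]
  simp only [Matrix.mul_assoc]

lemma Pmat_transpose (w : ℕ → ℝ) : ∀ t, Jmat * (Pmat w t)ᵀ * Jmat = Pmat' w t := by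
  intro t
  induction t with
  | zero => simp [Pmat, Pmat', JJ]
  | succ t ih =>
    show Jmat * (Amat (w (t+1)) * Pmat w t)ᵀ * Jmat = Pmat' w t * Amat (w (t+1))
    rw [Matrix.transpose_mul, Jconj_mul, ih, JAJ]

lemma Pmat_one (v : ℕ → ℝ) : Pmat v 1 = Amat (v 1) := by
  show Amat (v 1) * 1 = Amat (v 1); rw [Matrix.mul_one]

lemma Pmat_rev : ∀ (t : ℕ) (v w : ℕ → ℝ),
    (∀ i, 1 ≤ i → i ≤ t → v i = w (t + 1 - i)) → Pmat v t = Pmat' w t := by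
  intro t
  induction t with
  | zero => intro v w _; rfl
  | succ t ih =>
    intro v w h
    have hsplit : Pmat v (t + 1) = Pmat (fun i => v (i + 1)) t * Pmat v 1 :=
      Pmat_split v 1 t
    have hv1 : v 1 = w (t + 1) := by
      have := h 1 le_rfl (Nat.le_add_left 1 t)
      simpa using this
    have hrec : Pmat (fun i => v (i + 1)) t = Pmat' w t := by
      apply ih
      intro i hi1 hit
      show v (i + 1) = w (t + 1 - i)
      have := h (i + 1) (by omega) (by omega)
      rw [this]
      congr 1
      omega
    rw [hsplit, hrec, Pmat_one, hv1]
    rfl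

end ContQAux

open Matrix ContQAux in
/-- If `w_1,…,w_{n-1}` is a palindrome and `n = 2k` is even, then
`Q_n = (Q_{k+1} - Q_{k-1})·Q_k`. -/
theorem contQ_factor_even (w : ℕ → ℝ) (k : ℕ) (hk : 1 ≤ k)
    (hpal : ∀ i, 1 ≤ i → i ≤ 2 * k - 1 → w i = w (2 * k - i)) :
    contQ w (2 * k) =
      (contQ w (k + 1) - contQ w (k - 1)) * contQ w k := by
  obtain ⟨m, rfl⟩ : ∃ m, k = m + 1 := ⟨k - 1, by omega⟩
  -- split: Pmat w (2m+1) = Pmat w' m * Pmat w (m+1), with w' i = w (i + (m+1))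
  have hsplit : Pmat w (m + (m + 1)) = Pmat (fun i => w (i + (m + 1))) m * Pmat w (m + 1) :=
    Pmat_split w (m + 1) m
  have hrev : Pmat (fun i => w (i + (m + 1))) m = Pmat' w m := by
    apply Pmat_rev
    intro i hi1 him
    show w (i + (m + 1)) = w (m + 1 - i)
    have := hpal (i + (m + 1)) (by omega) (by omega)
    rw [this]
    congr 1
    omega
  have htr : Pmat' w m = Jmat * (Pmat w m)ᵀ * Jmat := (Pmat_transpose w m).symm
  have key : Pmat w (m + (m + 1)) = (Jmat * (Pmat w m)ᵀ * Jmat) * Pmat w (m + 1) := by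
    rw [hsplit, hrev, htr]
  have h2m : contQ w (2 * (m + 1)) = Pmat w (m + (m + 1)) 0 0 := by
    have := (Pmat_entries w (m + (m + 1))).1
    rw [this]
    congr 1
    omega
  rw [h2m, key]
  have e00 : Pmat w m 0 0 = contQ w (m + 1) := (Pmat_entries w m).1
  have e10 : Pmat w m 1 0 = contQ w m := (Pmat_entries w m).2
  have f00 : Pmat w (m + 1) 0 0 = contQ w (m + 2) := (Pmat_entries w (m + 1)).1
  have f10 : Pmat w (m + 1) 1 0 = contQ w (m + 1) := (Pmat_entries w (m + 1)).2
  rw [Matrix.mul_apply, Fin.sum_univ_two]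
  rw [Matrix.mul_apply, Fin.sum_univ_two, Matrix.mul_apply, Fin.sum_univ_two]
  simp only [Jmat, Matrix.transpose_apply, Matrix.mul_apply, Fin.sum_univ_two,
    Matrix.vecMul, dotProduct, e00, e10, f00, f10, Matrix.cons_val_zero,
    Matrix.cons_val_one, Matrix.head_cons, Matrix.of_apply]
  rw [show m + 1 + 1 = m + 2 from by omega, show m + 1 - 1 = m from by omega]
  ring
end

section
/- Let w_1,...,w_{n−1} be a palindrome of real numbers with n = 2k+1 odd, and let C = Q_{k+1} − Q_k. Then for each t with k ≤ t ≤ n, the difference Q_{n−t} − Q_t is divisible by C; specifically Q_{n−t} − Q_t = C · S_t where S_k = 1, S_{k+1} = −1, and S_{t+1} = w_t S_t − S_{t−1}. -/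
/-- Odd palindromic case `n = 2k+1`, `C = Q_{k+1} - Q_k`: for `k ≤ t ≤ n`,
`Q_{n-t} - Q_t = C · S_t`, where `S_k = 1`, `S_{k+1} = -1`,
`S_{t+1} = w_t S_t - S_{t-1}`. -/
theorem contQ_symmetry_odd (w : ℕ → ℝ) (k : ℕ) (S : ℕ → ℝ)
    (hpal : ∀ i, 1 ≤ i → i ≤ 2 * k + 1 - 1 → w i = w (2 * k + 1 - i))
    (hSk : S k = 1) (hSk1 : S (k + 1) = -1)
    (hSrec : ∀ t, k + 1 ≤ t → S (t + 1) = w t * S t - S (t - 1)) :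
    ∀ t, k ≤ t → t ≤ 2 * k + 1 →
      contQ w (2 * k + 1 - t) - contQ w t =
        (contQ w (k + 1) - contQ w k) * S t := by
  intro t ht htn
  obtain ⟨j, rfl⟩ : ∃ j, t = k + j := ⟨t - k, by omega⟩
  clear ht
  revert htn
  induction j using Nat.twoStepInduction with
  | zero =>
    intro _
    have h : 2 * k + 1 - (k + 0) = k + 1 := by omega
    rw [h, show k + 0 = k from rfl, hSk]
    ring
  | one =>
    intro _
    have h : 2 * k + 1 - (k + 1) = k := by omega
    rw [h, hSk1]
    ring
  | more j ih1 ih2 =>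
    intro htn
    have hjk : j + 1 ≤ k := by omega
    obtain ⟨m, hm⟩ : ∃ m, k - (j + 1) = m := ⟨_, rfl⟩
    have h1 : 2 * k + 1 - (k + (j + 2)) = m := by omega
    have h2 : 2 * k + 1 - (k + (j + 1)) = m + 1 := by omega
    have h3 : 2 * k + 1 - (k + j) = m + 2 := by omega
    have e2 := ih2 (by omega)
    have e1 := ih1 (by omega)
    rw [h2] at e2
    rw [h3] at e1
    have hw : w (m + 1) = w (k + (j + 1)) := by
      have := hpal (m + 1) (by omega) (by omega)
      rw [this]
      congr 1
      omega
    have hS : S (k + (j + 2)) = w (k + (j + 1)) * S (k + (j + 1)) - S (k + j) := by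
      have := hSrec (k + (j + 1)) (by omega)
      rw [show k + (j + 2) = k + (j + 1) + 1 by omega]
      simpa using this
    have hQm : contQ w (m + 2) = w (m + 1) * contQ w (m + 1) - contQ w m := rfl
    have hQt : contQ w (k + (j + 2)) =
        w (k + (j + 1)) * contQ w (k + (j + 1)) - contQ w (k + j) := rfl
    rw [h1, hS, hQt]
    rw [hw] at hQm
    linear_combination w (k + (j + 1)) * e2 - e1 + hQm
end

section
/- Let w_1,...,w_{n−1} be a palindrome of real numbers with n = 2k even, and let C = Q_{k+1} − Q_{k−1}. Then for each t with k ≤ t ≤ n, Q_{n−t} − Q_t = C · S_t where S_k = 0, S_{k+1} = −1, and S_{t+1} = w_t S_t − S_{t−1}. -/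
/-- Even palindromic case `n = 2k`, `C = Q_{k+1} - Q_{k-1}`: for `k ≤ t ≤ n`,
`Q_{n-t} - Q_t = C · S_t`, where `S_k = 0`, `S_{k+1} = -1`,
`S_{t+1} = w_t S_t - S_{t-1}`. -/
theorem contQ_symmetry_even (w : ℕ → ℝ) (k : ℕ) (hk : 1 ≤ k) (S : ℕ → ℝ)
    (hpal : ∀ i, 1 ≤ i → i ≤ 2 * k - 1 → w i = w (2 * k - i))
    (hSk : S k = 0) (hSk1 : S (k + 1) = -1)
    (hSrec : ∀ t, k + 1 ≤ t → S (t + 1) = w t * S t - S (t - 1)) :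
    ∀ t, k ≤ t → t ≤ 2 * k →
      contQ w (2 * k - t) - contQ w t =
        (contQ w (k + 1) - contQ w (k - 1)) * S t := by
  have key : ∀ d, k + d ≤ 2 * k →
      contQ w (2 * k - (k + d)) - contQ w (k + d) =
        (contQ w (k + 1) - contQ w (k - 1)) * S (k + d) := by
    intro d
    induction d using Nat.strong_induction_on with
    | _ d ih =>
      match d with
      | 0 =>
        intro _
        have h1 : 2 * k - (k + 0) = k := by omega
        rw [h1]
        simp [hSk]
      | 1 =>
        intro _
        have h1 : 2 * k - (k + 1) = k - 1 := by omega
        rw [h1, hSk1]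
        ring
      | (e + 2) =>
        intro hle
        obtain ⟨m, rfl⟩ : ∃ m, k = m + e + 2 := ⟨k - (e + 2), by omega⟩
        set k := m + e + 2 with hkdef
        have ih1 := ih (e + 1) (by omega) (by omega)
        have ih0 := ih e (by omega) (by omega)
        have e1 : 2 * k - (k + (e + 1)) = m + 1 := by omega
        have e0 : 2 * k - (k + e) = m + 2 := by omega
        have e2 : 2 * k - (k + (e + 2)) = m := by omega
        rw [e1] at ih1
        rw [e0] at ih0
        rw [e2]
        -- palindrome
        have hw : w (k + e + 1) = w (m + 1) := by
          have := hpal (k + e + 1) (by omega) (by omega)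
          have h3 : 2 * k - (k + e + 1) = m + 1 := by omega
          rwa [h3] at this
        -- recurrences
        have hQtop : contQ w (k + (e + 2)) =
            w (k + e + 1) * contQ w (k + (e + 1)) - contQ w (k + e) := by
          have : k + (e + 2) = (k + e) + 2 := by omega
          rw [this, contQ]
          ring_nf
        have hQbot : contQ w m =
            w (m + 1) * contQ w (m + 1) - contQ w (m + 2) := by
          have : contQ w (m + 2) = w (m + 1) * contQ w (m + 1) - contQ w m := by
            rw [contQ]
          linarith
        have hS : S (k + (e + 2)) =
            w (k + e + 1) * S (k + (e + 1)) - S (k + e) := by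
          have := hSrec (k + (e + 1)) (by omega)
          have h4 : k + (e + 1) + 1 = k + (e + 2) := by omega
          have h5 : k + (e + 1) - 1 = k + e := by omega
          rw [h4, h5] at this
          rw [this]
          ring_nf
        rw [hQtop, hQbot, hS, hw]
        linear_combination w (m + 1) * ih1 - ih0
  intro t ht ht2
  obtain ⟨d, rfl⟩ := Nat.exists_eq_add_of_le ht
  exact key d ht2
end
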